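/- Let H be a commutative Artinian ring that is injective as a module over itself (i.e., H is self-injective, equivalently Gorenstein of dimension 0). Then for every finitely generated H-module M, the natural evaluation map M → Hom_H(Hom_H(M, H), H) is an isomorphism. -/

import Mathlib

open Module Submodule LinearMap

section Aux

variable {H : Type*} [CommRing H]

/-! ### Artinian commutative rings are Noetherian (Hopkins–Levitzki) -/

/-- If `Q` is an Artinian module killed by an ideal `I` with semisimple quotient ring `H ⧸ I`,
then `Q` is Noetherian. -/
lemma aux_isNoetherian_of_torsion [IsArtinianRing H] (I : Ideal H) {Q : Type*} [AddCommGroup Q]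
    [Module H Q] (tors : Module.IsTorsionBySet H Q I) (hsemi : IsSemisimpleRing (H ⧸ I))
    [IsArtinian H Q] : IsNoetherian H Q := by
  letI : Module (H ⧸ I) Q := tors.module
  haveI : IsScalarTower H (H ⧸ I) Q := tors.isScalarTower
  haveI hart : IsArtinian (H ⧸ I) Q := isArtinian_of_tower H inferInstance
  haveI := hsemi
  haveI : IsSemisimpleModule (H ⧸ I) Q := inferInstance
  haveI hnoeth : IsNoetherian (H ⧸ I) Q :=
    ((IsSemisimpleModule.finite_tfae (R := H ⧸ I) (M := Q)).out 2 1).mp hart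
  let e : Submodule H Q ↪o Submodule (H ⧸ I) Q :=
    { toFun := fun p =>
        { carrier := p
          add_mem' := fun ha hb => p.add_mem ha hb
          zero_mem' := p.zero_mem
          smul_mem' := by
            intro c x hx
            obtain ⟨b, rfl⟩ := Ideal.Quotient.mk_surjective c
            rw [tors.mk_smul]
            exact p.smul_mem b hx }
      inj' := fun p q h => by
        ext x
        exact SetLike.ext_iff.mp h x
      map_rel_iff' := Iff.rfl }
  exact isNoetherian_mk ⟨e.dual.wellFounded hnoeth.wf⟩

/-- One step of the filtration argument. -/
lemma aux_step [IsArtinianRing H] (J : Ideal H) (hsemi : IsSemisimpleRing (H ⧸ J))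
    (A B : Ideal H) (hAB : A ≤ B) (hJBA : ∀ j ∈ J, ∀ b ∈ B, j * b ∈ A)
    (hA : IsNoetherian H A) : IsNoetherian H B := by
  haveI := hA
  haveI : IsNoetherian H (Submodule.comap B.subtype A) :=
    isNoetherian_of_linearEquiv (Submodule.comapSubtypeEquivOfLe hAB).symm
  have tors : Module.IsTorsionBySet H (B ⧸ Submodule.comap B.subtype A) (J : Set H) := by
    intro x a
    obtain ⟨y, rfl⟩ := (Submodule.comap B.subtype A).mkQ_surjective x
    rw [← map_smul, Submodule.mkQ_apply, Submodule.Quotient.mk_eq_zero, Submodule.mem_comap]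
    exact hJBA (a : H) a.2 (y : H) y.2
  haveI : IsNoetherian H (B ⧸ Submodule.comap B.subtype A) := aux_isNoetherian_of_torsion J tors hsemi
  exact (isNoetherian_iff_submodule_quotient (Submodule.comap B.subtype A)).mpr ⟨‹_›, ‹_›⟩

lemma aux_isNoetherianRing [IsArtinianRing H] : IsNoetherianRing H := by
  classical
  obtain ⟨n, hn'⟩ := IsArtinianRing.isNilpotent_jacobson_bot (R := H)
  set jac := Ideal.jacobson (⊥ : Ideal H) with hjdef
  have hn : jac ^ n = ⊥ := hn'.trans Ideal.zero_eq_bot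
  haveI : IsReduced (H ⧸ jac) := by
    constructor
    intro x hx
    obtain ⟨x, rfl⟩ := Ideal.Quotient.mk_surjective x
    obtain ⟨m, hm⟩ := hx
    rw [← map_pow, Ideal.Quotient.eq_zero_iff_mem] at hm
    have h2 : (x ^ m) ^ n ∈ jac ^ n := Ideal.pow_mem_pow hm n
    rw [hn, Submodule.mem_bot] at h2
    have h3 : x ^ (m * n) = 0 := by rwa [pow_mul]
    have h4 : x ∈ jac :=
      Ideal.radical_le_jacobson (Ideal.mem_radical_iff.mpr ⟨m * n, by rw [Ideal.mem_bot]; exact h3⟩)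
    rw [Ideal.Quotient.eq_zero_iff_mem]
    exact h4
  haveI hsemi : IsSemisimpleRing (H ⧸ jac) :=
    IsArtinianRing.isSemisimpleRing_of_isReduced (H ⧸ jac)
  have key : ∀ k : ℕ, IsNoetherian H (jac ^ (n - k) : Ideal H) := by
    intro k
    induction k with
    | zero =>
      simp only [Nat.sub_zero]
      haveI : Subsingleton (jac ^ n : Ideal H) := by
        rw [hn]
        exact ⟨fun a b => Subtype.ext (by
          have ha := a.2; have hb := b.2
          rw [Submodule.mem_bot] at ha hb
          rw [ha, hb])⟩
      exact isNoetherian_of_finite H _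
    | succ k ih =>
      by_cases hk : n ≤ k
      · have h : n - (k + 1) = n - k := by omega
        rw [h]
        exact ih
      · have hsucc : n - k = (n - (k + 1)) + 1 := by omega
        rw [hsucc] at ih
        refine aux_step jac hsemi _ _ (Ideal.pow_le_pow_right (Nat.le_succ _)) ?_ ih
        intro j hj b hb
        rw [pow_succ']
        exact Ideal.mul_mem_mul hj hb
  have hfin := key n
  rw [Nat.sub_self, pow_zero, Ideal.one_eq_top] at hfin
  exact isNoetherian_of_linearEquiv (Submodule.topEquiv (R := H) (M := H))

/-! ### The socle of a maximal ideal is nonzero -/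

/-- In an Artinian commutative ring, the socle of any maximal ideal is nonzero. -/
lemma aux_socle_exists [IsArtinianRing H] {𝔪 : Ideal H} (hm : 𝔪.IsMaximal) :
    ∃ x : H, x ≠ 0 ∧ ∀ a ∈ 𝔪, a * x = 0 := by
  classical
  have hnt : Nontrivial H := by
    rcases subsingleton_or_nontrivial H with h | h
    · exact absurd (Subsingleton.elim 𝔪 ⊤) hm.ne_top
    · exact h
  obtain ⟨n₀, hn₀⟩ := IsArtinianRing.isNilpotent_jacobson_bot (R := H)
  set n : ℕ := n₀ + 1 with hndef
  have hjac : (Ideal.jacobson (⊥ : Ideal H)) ^ n = ⊥ := by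
    rw [hndef, pow_succ, hn₀, zero_mul, Ideal.zero_eq_bot]
  have hn0 : n ≠ 0 := Nat.succ_ne_zero n₀
  set s : Finset (Ideal H) := (IsArtinianRing.setOfPred_isMaximal_finite H).toFinset with hsdef
  have hmem_s : ∀ {I : Ideal H}, I ∈ s ↔ I.IsMaximal := by
    intro I
    rw [hsdef, Set.Finite.mem_toFinset]
    exact Iff.rfl
  have hms : 𝔪 ∈ s := hmem_s.mpr hm
  have hprodle : (∏ I ∈ s, I) ≤ Ideal.jacobson (⊥ : Ideal H) := by
    refine le_sInf ?_
    rintro J ⟨-, hJ⟩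
    exact le_trans Ideal.prod_le_inf (Finset.inf_le (hmem_s.mpr hJ))
  set N : Ideal H := (∏ I ∈ s.erase 𝔪, I) ^ n with hNdef
  have hNkill : 𝔪 ^ n * N = ⊥ := by
    have h1 : 𝔪 ^ n * N = (∏ I ∈ s, I) ^ n := by
      rw [hNdef, ← mul_pow, Finset.mul_prod_erase s (fun I => I) hms]
    rw [h1, ← le_bot_iff]
    exact hjac ▸ Ideal.pow_right_mono hprodle n
  have hN0 : N ≠ ⊥ := by
    intro hN
    haveI := hm.isPrime
    have hle : (∏ I ∈ s.erase 𝔪, I) ^ n ≤ 𝔪 := by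
      rw [← hNdef, hN]
      exact bot_le
    rw [Ideal.IsPrime.pow_le_iff hn0] at hle
    obtain ⟨I, hIs, hIle⟩ := (Ideal.IsPrime.prod_le hm.isPrime).mp hle
    have hImax : Ideal.IsMaximal I := hmem_s.mp (Finset.mem_of_mem_erase hIs)
    exact (Finset.ne_of_mem_erase hIs) (hImax.eq_of_le hm.ne_top hIle)
  -- minimal power of 𝔪 killing N
  have hex : ∃ k, 𝔪 ^ k * N = ⊥ := ⟨n, hNkill⟩
  have hk : 𝔪 ^ (Nat.find hex) * N = ⊥ := Nat.find_spec hex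
  have hkpos : Nat.find hex ≠ 0 := by
    intro h
    rw [h, pow_zero, one_mul] at hk
    exact hN0 hk
  have hlt : ¬(𝔪 ^ (Nat.find hex - 1) * N = ⊥) :=
    Nat.find_min hex (Nat.sub_lt (Nat.pos_of_ne_zero hkpos) one_pos)
  obtain ⟨x, hxmem, hx0⟩ := (Submodule.ne_bot_iff _).mp hlt
  refine ⟨x, hx0, fun a ha => ?_⟩
  have hmem : a * x ∈ 𝔪 * (𝔪 ^ (Nat.find hex - 1) * N) := Ideal.mul_mem_mul ha hxmem
  rw [← mul_assoc, ← pow_succ', Nat.sub_add_cancel (Nat.one_le_iff_ne_zero.mpr hkpos), hk]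
    at hmem
  simpa using hmem

/-! ### Construction of functionals via self-injectivity -/

/-- Given `m : M` and `x : H` killed by everything killing `m`, there is a functional
sending `m` to `x` (uses self-injectivity through Baer's criterion). -/
lemma aux_exists_functional (baer : Module.Baer H H) {M : Type*} [AddCommGroup M] [Module H M]
    (m : M) (x : H) (hkill : ∀ a : H, a • m = 0 → a * x = 0) :
    ∃ φ : M →ₗ[H] H, φ m = x := by
  have hker : Ideal.torsionOf H M m ≤ LinearMap.ker (LinearMap.toSpanSingleton H H x) := by
    intro a ha
    rw [LinearMap.mem_ker, LinearMap.toSpanSingleton_apply, smul_eq_mul]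
    exact hkill a ((Ideal.mem_torsionOf_iff m a).mp ha)
  let ψ : (H ⧸ Ideal.torsionOf H M m) →ₗ[H] H :=
    Submodule.liftQ _ (LinearMap.toSpanSingleton H H x) hker
  let e := Ideal.quotTorsionOfEquivSpanSingleton H M m
  let φ₀ : (Submodule.span H {m} : Submodule H M) →ₗ[H] H := ψ ∘ₗ (e.symm : _ →ₗ[H] _)
  obtain ⟨φ, hφ⟩ := baer.extension_property (Submodule.span H {m}).subtype
    (Submodule.injective_subtype _) φ₀
  refine ⟨φ, ?_⟩
  have hmem : m ∈ Submodule.span H {m} := Submodule.mem_span_singleton_self m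
  have h1 : e.symm ⟨m, hmem⟩ = Submodule.Quotient.mk 1 := by
    rw [LinearEquiv.symm_apply_eq, Ideal.quotTorsionOfEquivSpanSingleton_apply_mk, one_smul]
  have h2 : φ₀ ⟨m, hmem⟩ = x := by
    show ψ (e.symm ⟨m, hmem⟩) = x
    rw [h1]
    show (LinearMap.toSpanSingleton H H x) 1 = x
    simp
  have h3 := congrArg (fun f : (Submodule.span H {m} : Submodule H M) →ₗ[H] H =>
    f ⟨m, hmem⟩) hφ
  simpa [h2] using h3

/-- Any two elements of the socle of a maximal ideal are proportional. -/
lemma aux_socle_dominated (baer : Module.Baer H H) {𝔪 : Ideal H} (hm : 𝔪.IsMaximal)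
    {x y : H} (hx : x ≠ 0) (hxm : ∀ a ∈ 𝔪, a * x = 0) (hym : ∀ a ∈ 𝔪, a * y = 0) :
    ∃ c : H, y = c * x := by
  have htx : Ideal.torsionOf H H x = 𝔪 := by
    refine (hm.eq_of_le ?_ ?_).symm
    · rw [Ne, Ideal.torsionOf_eq_top_iff]
      exact hx
    · intro a ha
      rw [Ideal.mem_torsionOf_iff, smul_eq_mul]
      exact hxm a ha
  obtain ⟨φ, hφ⟩ := aux_exists_functional baer x y (fun a ha => by
    refine hym a ?_
    rw [← htx, Ideal.mem_torsionOf_iff]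
    exact ha)
  refine ⟨φ 1, ?_⟩
  calc y = φ x := hφ.symm
    _ = φ (x • 1) := by rw [smul_eq_mul, mul_one]
    _ = x • φ 1 := map_smul φ x 1
    _ = φ 1 * x := by rw [smul_eq_mul, mul_comm]

/-- Separating functionals exist. -/
lemma aux_exists_dual_ne [IsArtinianRing H] (baer : Module.Baer H H)
    {M : Type*} [AddCommGroup M] [Module H M] {m : M} (hm : m ≠ 0) :
    ∃ φ : M →ₗ[H] H, φ m ≠ 0 := by
  have hne : Ideal.torsionOf H M m ≠ ⊤ := by
    rw [Ne, Ideal.torsionOf_eq_top_iff]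
    exact hm
  obtain ⟨𝔪, hmax, hle⟩ := Ideal.exists_le_maximal _ hne
  obtain ⟨x, hx0, hxm⟩ := aux_socle_exists hmax
  obtain ⟨φ, hφ⟩ := aux_exists_functional baer m x (fun a ha =>
    hxm a (hle ((Ideal.mem_torsionOf_iff m a).mpr ha)))
  exact ⟨φ, by rw [hφ]; exact hx0⟩

/-- The evaluation map into the bidual is always injective over a self-injective
Artinian commutative ring. -/
lemma aux_eval_injective [IsArtinianRing H] (baer : Module.Baer H H)
    {M : Type*} [AddCommGroup M] [Module H M] :
    Function.Injective (Module.Dual.eval H M) := by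
  intro a b hab
  by_contra hne
  have hsub : a - b ≠ 0 := sub_ne_zero.mpr hne
  obtain ⟨φ, hφ⟩ := aux_exists_dual_ne baer hsub
  apply hφ
  have h2 : φ a = φ b := by
    simpa [Module.Dual.eval_apply] using congrArg (fun f => f φ) hab
  rw [map_sub, h2, sub_self]

/-! ### The simple case -/

/-- The dual of a simple module is simple. -/
lemma aux_dual_simple [IsArtinianRing H] (baer : Module.Baer H H)
    {S : Type*} [AddCommGroup S] [Module H S] [IsSimpleModule H S] :
    IsSimpleModule H (Module.Dual H S) := by
  have hnt : Nontrivial S := IsSimpleModule.nontrivial H S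
  obtain ⟨m₀, hm₀⟩ := exists_ne (0 : S)
  have eq_of_apply : ∀ φ ψ : Module.Dual H S, φ m₀ = ψ m₀ → φ = ψ := by
    intro φ ψ h
    have hsub : Submodule.span H {m₀} ≤ LinearMap.ker (φ - ψ) := by
      rw [Submodule.span_le, Set.singleton_subset_iff]
      simp [LinearMap.mem_ker, h]
    rw [IsSimpleModule.span_singleton_eq_top H hm₀, top_le_iff] at hsub
    exact sub_eq_zero.mp (LinearMap.ker_eq_top.mp hsub)
  have apply_ne : ∀ φ : Module.Dual H S, φ ≠ 0 → φ m₀ ≠ 0 := by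
    intro φ hφ h0
    exact hφ (eq_of_apply φ 0 (by simpa using h0))
  have hmax : (Ideal.torsionOf H S m₀).IsMaximal := by
    have h1 : Ideal.torsionOf H S m₀ = LinearMap.ker (LinearMap.toSpanSingleton H S m₀) := by
      ext a
      simp [Ideal.mem_torsionOf_iff, LinearMap.mem_ker, LinearMap.toSpanSingleton_apply]
    rw [h1]
    exact IsSimpleModule.ker_toSpanSingleton_isMaximal H hm₀
  have socmem : ∀ φ : Module.Dual H S, ∀ a ∈ Ideal.torsionOf H S m₀, a * φ m₀ = 0 := by
    intro φ a ha
    have h : a • m₀ = 0 := (Ideal.mem_torsionOf_iff m₀ a).mp ha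
    rw [← smul_eq_mul, ← map_smul, h, map_zero]
  rw [isSimpleModule_iff_toSpanSingleton_surjective]
  constructor
  · obtain ⟨φ, hφ⟩ := aux_exists_dual_ne baer hm₀
    exact nontrivial_of_ne φ 0 (fun h => hφ (by simp [h]))
  · intro φ hφ ψ
    obtain ⟨c, hc⟩ := aux_socle_dominated baer hmax (apply_ne φ hφ)
      (socmem φ) (socmem ψ)
    refine ⟨c, ?_⟩
    rw [LinearMap.toSpanSingleton_apply]
    refine eq_of_apply _ _ ?_
    simpa [smul_eq_mul] using hc.symm

/-- The evaluation map is bijective for simple modules. -/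
lemma aux_eval_bijective_simple [IsArtinianRing H] (baer : Module.Baer H H)
    {S : Type*} [AddCommGroup S] [Module H S] [IsSimpleModule H S] :
    Function.Bijective (Module.Dual.eval H S) := by
  have hnt : Nontrivial S := IsSimpleModule.nontrivial H S
  refine ⟨aux_eval_injective baer, ?_⟩
  haveI hds : IsSimpleModule H (Module.Dual H S) := aux_dual_simple baer
  haveI hdds : IsSimpleModule H (Module.Dual H (Module.Dual H S)) := aux_dual_simple baer
  have hrange : LinearMap.range (Module.Dual.eval H S) ≠ ⊥ := by
    obtain ⟨m₀, hm₀⟩ := exists_ne (0 : S)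
    intro h
    have h0 : Module.Dual.eval H S m₀ = 0 := by
      have hmem := LinearMap.mem_range_self (Module.Dual.eval H S) m₀
      rw [h, Submodule.mem_bot] at hmem
      exact hmem
    obtain ⟨φ, hφ⟩ := aux_exists_dual_ne baer hm₀
    exact hφ (by simpa [Module.Dual.eval_apply] using congrArg (fun f => f φ) h0)
  rw [← LinearMap.range_eq_top]
  exact (eq_bot_or_eq_top _).resolve_left hrange

/-! ### Exactness of dualization -/

/-- If `v` is surjective and `ker v = range u`, then any functional killed by `u.dualMap`
comes from `v.dualMap`. -/
lemma aux_dual_exact {A B C : Type*} [AddCommGroup A] [AddCommGroup B] [AddCommGroup C]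
    [Module H A] [Module H B] [Module H C] (u : A →ₗ[H] B) (v : B →ₗ[H] C)
    (hv : Function.Surjective v) (hexact : LinearMap.ker v = LinearMap.range u)
    {φ : Module.Dual H B} (hφ : u.dualMap φ = 0) : ∃ ψ : Module.Dual H C, v.dualMap ψ = φ := by
  have hker : LinearMap.ker v ≤ LinearMap.ker φ := by
    rw [hexact]
    rintro b ⟨a, rfl⟩
    have h : u.dualMap φ a = 0 := by rw [hφ]; rfl
    simpa using h
  refine ⟨(Submodule.liftQ _ φ hker) ∘ₗ ((v.quotKerEquivOfSurjective hv).symm : C →ₗ[H] _), ?_⟩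
  ext b
  have h1 : (v.quotKerEquivOfSurjective hv).symm (v b) = Submodule.Quotient.mk b := by
    rw [LinearEquiv.symm_apply_eq]
    rfl
  simp only [LinearMap.dualMap_apply, LinearMap.coe_comp, LinearEquiv.coe_coe,
    Function.comp_apply]
  rw [h1, Submodule.liftQ_apply]

/-! ### Main induction -/

/-- The evaluation map is bijective for modules of finite length. -/
lemma aux_eval_bijective_of_isFiniteLength [IsArtinianRing H] (baer : Module.Baer H H)
    {M : Type*} [AddCommGroup M] [Module H M] (h : IsFiniteLength H M) :
    Function.Bijective (Module.Dual.eval H M) := by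
  induction h with
  | of_subsingleton =>
    exact ⟨fun a b _ => Subsingleton.elim a b, fun ξ => ⟨0, Subsingleton.elim _ _⟩⟩
  | @of_simple_quotient M _ _ N _ hfl ih =>
    refine ⟨aux_eval_injective baer, ?_⟩
    intro ξ
    obtain ⟨zbar, hz⟩ :=
      (aux_eval_bijective_simple baer (S := M ⧸ N)).2 (N.mkQ.dualMap.dualMap ξ)
    obtain ⟨z, rfl⟩ := N.mkQ_surjective zbar
    have hnatp := LinearMap.congr_fun (Module.Dual.eval_naturality N.mkQ) z
    simp only [LinearMap.coe_comp, Function.comp_apply] at hnatp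
    have hδ : N.mkQ.dualMap.dualMap (ξ - Module.Dual.eval H M z) = 0 := by
      rw [map_sub, hnatp, ← hz, sub_self]
    have hvsurj : Function.Surjective (N.subtype.dualMap) := by
      intro φ
      obtain ⟨Φ, hΦ⟩ := baer.extension_property N.subtype (Submodule.injective_subtype N) φ
      exact ⟨Φ, hΦ⟩
    have hexact1 : LinearMap.ker (N.subtype.dualMap) = LinearMap.range (N.mkQ.dualMap) := by
      ext φ
      constructor
      · intro hφ
        rw [LinearMap.mem_ker] at hφ
        obtain ⟨ψ, hψ⟩ := aux_dual_exact N.subtype N.mkQ N.mkQ_surjective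
          (by rw [Submodule.ker_mkQ, Submodule.range_subtype]) hφ
        exact ⟨ψ, hψ⟩
      · rintro ⟨ψ, rfl⟩
        rw [LinearMap.mem_ker]
        ext n
        simp only [LinearMap.dualMap_apply, LinearMap.coe_comp, Function.comp_apply,
          LinearMap.zero_apply]
        have h0 : N.mkQ (N.subtype n) = 0 := by
          simp [Submodule.mkQ_apply, Submodule.Quotient.mk_eq_zero]
        rw [h0, map_zero]
    obtain ⟨η, hη⟩ := aux_dual_exact N.mkQ.dualMap N.subtype.dualMap hvsurj hexact1 hδ
    obtain ⟨n, rfl⟩ := ih.2 η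
    have hnati := LinearMap.congr_fun (Module.Dual.eval_naturality N.subtype) n
    simp only [LinearMap.coe_comp, Function.comp_apply] at hnati
    refine ⟨z + N.subtype n, ?_⟩
    rw [map_add, ← hnati, hη]
    abel

end Aux

/-- Over a commutative Artinian ring `H` that is injective as a module over itself (i.e. a
zero-dimensional Gorenstein ring), every finitely generated module is reflexive: the natural
evaluation map `M → Hom_H(Hom_H(M, H), H)` is an isomorphism. -/
theorem bidual_eval_bijective_of_selfInjective {H : Type*} [CommRing H] [IsArtinianRing H]
    [Module.Injective H H] (M : Type*) [AddCommGroup M] [Module H M] [Module.Finite H M] :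
    Function.Bijective (Module.Dual.eval H M) := by
  have baer : Module.Baer H H := Module.Baer.of_injective ‹Module.Injective H H›
  haveI : IsNoetherianRing H := aux_isNoetherianRing
  haveI h1 : IsNoetherian H M := isNoetherian_of_isNoetherianRing_of_finite H M
  haveI h2 : IsArtinian H M := inferInstance
  exact aux_eval_bijective_of_isFiniteLength baer
    (isFiniteLength_iff_isNoetherian_isArtinian.mpr ⟨h1, h2⟩)
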